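/- If (A_n) is a Markov sequence of events with P(A_n) → 0, P(A_n) ≠ 1 for all n ≥ N, and ∑_{n=N}^∞ P(A_{n+1} | A_n^c) < ∞, then P(limsup A_n) = 0. -/

import Mathlib

open MeasureTheory Filter

/-- `A` is a Markov sequence of events: the indicators `1_{A n}` form a Markov chain.
Elementary formulation: conditionally on any cylinder event determined by
`A 0, …, A n` (each taken either as itself or its complement), the conditional
probability of `A (n+1)` depends only on the last coordinate. -/
def IsMarkovSeq {Ω : Type*} [MeasurableSpace Ω] (μ : Measure Ω) (A : ℕ → Set Ω) : Prop :=
  ∀ n : ℕ, ∀ B : ℕ → Set Ω, (∀ i, i ≤ n → B i = A i ∨ B i = (A i)ᶜ) →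
    μ (⋂ i ∈ Finset.range (n + 1), B i) ≠ 0 →
    μ (A (n + 1) ∩ ⋂ i ∈ Finset.range (n + 1), B i) * μ (B n)
      = μ (A (n + 1) ∩ B n) * μ (⋂ i ∈ Finset.range (n + 1), B i)

theorem stmt2 {Ω : Type*} [MeasurableSpace Ω] (μ : Measure Ω) [IsProbabilityMeasure μ]
    (A : ℕ → Set Ω) (hmeas : ∀ n, MeasurableSet (A n))
    (hMarkov : IsMarkovSeq μ A)
    (h0 : Tendsto (fun n => μ (A n)) atTop (nhds 0))
    (N : ℕ) (hN : ∀ n, N ≤ n → μ (A n) ≠ 1)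
    (hsum : ∑' n : ℕ, μ (A (N + n + 1) ∩ (A (N + n))ᶜ) / μ ((A (N + n))ᶜ) ≠ ⊤) :
    μ (limsup A atTop) = 0 := by
  classical
  set q : ℕ → ENNReal := fun m => μ (A (m + 1) ∩ (A m)ᶜ) / μ ((A m)ᶜ) with hq
  -- Key identity
  have key : ∀ n m : ℕ, n ≤ m →
      μ (A (m + 1) ∩ ⋂ i ∈ Finset.Icc n m, (A i)ᶜ) * μ ((A m)ᶜ)
        = μ (A (m + 1) ∩ (A m)ᶜ) * μ (⋂ i ∈ Finset.Icc n m, (A i)ᶜ) := by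
    intro n m hnm
    have aux : ∀ j : ℕ, ∀ B : ℕ → Set Ω, (∀ i, i < n - j → B i = A i ∨ B i = (A i)ᶜ) →
        μ (A (m + 1) ∩ ((⋂ i ∈ Finset.range (n - j), B i) ∩ ⋂ i ∈ Finset.Icc n m, (A i)ᶜ))
            * μ ((A m)ᶜ)
          = μ (A (m + 1) ∩ (A m)ᶜ)
            * μ ((⋂ i ∈ Finset.range (n - j), B i) ∩ ⋂ i ∈ Finset.Icc n m, (A i)ᶜ) := by
      intro j
      induction j with
      | zero =>
        intro B hB
        simp only [Nat.sub_zero] at hB ⊢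
        set B' : ℕ → Set Ω := fun i => if i < n then B i else (A i)ᶜ with hB'
        have hEq : (⋂ i ∈ Finset.range (m + 1), B' i)
            = (⋂ i ∈ Finset.range n, B i) ∩ ⋂ i ∈ Finset.Icc n m, (A i)ᶜ := by
          ext x
          simp only [Set.mem_iInter, Finset.mem_range, Set.mem_inter_iff, Finset.mem_Icc]
          constructor
          · intro h
            refine ⟨fun i hi => ?_, fun i hi => ?_⟩
            · have := h i (by omega); simpa [hB', hi] using this
            · have := h i (by omega); simpa [hB', Nat.not_lt.mpr hi.1] using this
          · rintro ⟨h1, h2⟩ i hi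
            by_cases hin : i < n
            · simpa [hB', hin] using h1 i hin
            · simpa [hB', hin] using h2 i ⟨Nat.le_of_not_lt hin, by omega⟩
        have hBm : B' m = (A m)ᶜ := by simp [hB', Nat.not_lt.mpr hnm]
        by_cases hzero :
            μ ((⋂ i ∈ Finset.range n, B i) ∩ ⋂ i ∈ Finset.Icc n m, (A i)ᶜ) = 0
        · have h1 : μ (A (m + 1) ∩ ((⋂ i ∈ Finset.range n, B i) ∩
              ⋂ i ∈ Finset.Icc n m, (A i)ᶜ)) = 0 :=
            measure_mono_null Set.inter_subset_right hzero
          rw [hzero, h1, zero_mul, mul_zero]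
        · have hByp : ∀ i, i ≤ m → B' i = A i ∨ B' i = (A i)ᶜ := by
            intro i _
            by_cases hin : i < n
            · simpa [hB', hin] using hB i hin
            · right; simp [hB', hin]
          have := hMarkov m B' hByp (by rw [hEq]; exact hzero)
          rw [hEq, hBm] at this
          exact this
      | succ j ih =>
        intro B hB
        rcases Nat.lt_or_ge j n with hjn | hjn
        · set k := n - (j + 1) with hk
          have hnj : n - j = k + 1 := by omega
          set P := ⋂ i ∈ Finset.range k, B i with hP
          set D := ⋂ i ∈ Finset.Icc n m, (A i)ᶜ with hD
          have cylB : ∀ S : Set Ω,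
              (⋂ i ∈ Finset.range (n - j), Function.update B k S i) = P ∩ S := by
            intro S
            rw [hnj, Finset.range_add_one]
            rw [Finset.set_biInter_insert]
            rw [Function.update_self]
            have : (⋂ i ∈ Finset.range k, Function.update B k S i) = P := by
              apply Set.iInter₂_congr
              intro i hi
              exact Function.update_of_ne (by simp at hi; omega) _ _
            rw [this, Set.inter_comm]
          have hyp : ∀ (S : Set Ω), (S = A k ∨ S = (A k)ᶜ) →
              ∀ i, i < n - j → Function.update B k S i = A i ∨
                Function.update B k S i = (A i)ᶜ := by
            intro S hS i hi
            by_cases hik : i = k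
            · subst hik; rw [Function.update_self]; exact hS
            · rw [Function.update_of_ne hik]; exact hB i (by omega)
          have h1 := ih (Function.update B k (A k)) (hyp _ (Or.inl rfl))
          have h2 := ih (Function.update B k ((A k)ᶜ)) (hyp _ (Or.inr rfl))
          rw [cylB] at h1
          rw [cylB] at h2
          have split : ∀ X : Set Ω,
              μ (X ∩ (P ∩ D)) = μ (X ∩ ((P ∩ A k) ∩ D)) + μ (X ∩ ((P ∩ (A k)ᶜ) ∩ D)) := by
            intro X
            have hd := measure_inter_add_diff (μ := μ) (X ∩ (P ∩ D)) (hmeas k)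
            rw [Set.diff_eq] at hd
            rw [← hd]
            congr 1 <;> · congr 1; ext x; simp only [Set.mem_inter_iff, Set.mem_compl_iff]; tauto
          have splitU : μ (P ∩ D) = μ ((P ∩ A k) ∩ D) + μ ((P ∩ (A k)ᶜ) ∩ D) := by
            have hd := measure_inter_add_diff (μ := μ) (P ∩ D) (hmeas k)
            rw [Set.diff_eq] at hd
            rw [← hd]
            congr 1 <;> · congr 1; ext x; simp only [Set.mem_inter_iff, Set.mem_compl_iff]; tauto
          rw [split, splitU, add_mul, mul_add, h1, h2]
        · have h1 : n - (j + 1) = n - j := by omega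
          rw [h1] at hB ⊢
          exact ih B hB
    have := aux n (fun _ => Set.univ) (by intro i hi; omega)
    simpa using this
  -- complement measures are nonzero past N
  have hc : ∀ m, N ≤ m → μ ((A m)ᶜ) ≠ 0 := by
    intro m hm
    rw [prob_compl_eq_one_sub (hmeas m)]
    intro h
    have h1 : (1 : ENNReal) ≤ μ (A m) := tsub_eq_zero_iff_le.mp h
    exact hN m hm (le_antisymm prob_le_one h1)
  -- bound by q
  have hbound : ∀ n m, N ≤ n → n ≤ m →
      μ (A (m + 1) ∩ ⋂ i ∈ Finset.Icc n m, (A i)ᶜ) ≤ q m := by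
    intro n m hNn hnm
    rw [hq]
    rw [ENNReal.le_div_iff_mul_le (Or.inl (hc m (hNn.trans hnm)))
      (Or.inl (measure_ne_top μ _))]
    calc μ (A (m + 1) ∩ ⋂ i ∈ Finset.Icc n m, (A i)ᶜ) * μ ((A m)ᶜ)
        = μ (A (m + 1) ∩ (A m)ᶜ) * μ (⋂ i ∈ Finset.Icc n m, (A i)ᶜ) := key n m hnm
      _ ≤ μ (A (m + 1) ∩ (A m)ᶜ) * 1 := mul_le_mul_right prob_le_one _
      _ = μ (A (m + 1) ∩ (A m)ᶜ) := mul_one _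
  -- first entrance decomposition
  have hcover : ∀ n, (⋃ k, A (n + k)) ⊆
      A n ∪ ⋃ k, (A (n + k + 1) ∩ ⋂ i ∈ Finset.Icc n (n + k), (A i)ᶜ) := by
    intro n x hx
    simp only [Set.mem_iUnion] at hx
    have hex : ∃ k, x ∈ A (n + k) := hx
    by_cases hk0 : Nat.find hex = 0
    · left
      have := Nat.find_spec hex
      rw [hk0] at this
      simpa using this
    · right
      refine Set.mem_iUnion.mpr ⟨Nat.find hex - 1, ?_, ?_⟩
      · have h1 : n + (Nat.find hex - 1) + 1 = n + Nat.find hex := by omega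
        rw [h1]; exact Nat.find_spec hex
      · simp only [Set.mem_iInter, Finset.mem_Icc, Set.mem_compl_iff]
        rintro i ⟨hi1, hi2⟩ hxi
        refine Nat.find_min hex (m := i - n) (by omega) ?_
        rw [show n + (i - n) = i by omega]
        exact hxi
  -- main bound
  have hmain : ∀ t : ℕ, μ (limsup A atTop) ≤ μ (A (N + t)) + ∑' k, q (N + t + k) := by
    intro t
    set n := N + t with hn
    have hsub : limsup A atTop ⊆ ⋃ k, A (n + k) := by
      have h1 : limsup A atTop ≤ ⨆ i, A (i + n) := by
        rw [limsup_eq_iInf_iSup_of_nat']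
        exact iInf_le _ n
      refine h1.trans ?_
      intro x hx
      simp only [Set.iSup_eq_iUnion, Set.mem_iUnion] at hx ⊢
      obtain ⟨i, hi⟩ := hx
      exact ⟨i, by rwa [Nat.add_comm]⟩
    calc μ (limsup A atTop) ≤ μ (⋃ k, A (n + k)) := measure_mono hsub
      _ ≤ μ (A n ∪ ⋃ k, (A (n + k + 1) ∩ ⋂ i ∈ Finset.Icc n (n + k), (A i)ᶜ)) :=
          measure_mono (hcover n)
      _ ≤ μ (A n) + μ (⋃ k, (A (n + k + 1) ∩ ⋂ i ∈ Finset.Icc n (n + k), (A i)ᶜ)) :=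
          measure_union_le _ _
      _ ≤ μ (A n) + ∑' k, μ (A (n + k + 1) ∩ ⋂ i ∈ Finset.Icc n (n + k), (A i)ᶜ) :=
          add_le_add_right (measure_iUnion_le _) _
      _ ≤ μ (A n) + ∑' k, q (n + k) :=
          add_le_add_right (ENNReal.tsum_le_tsum fun k =>
            hbound n (n + k) (by omega) (by omega)) _
  -- limits
  have hsum' : ∑' k, q (N + k) ≠ ⊤ := by
    rw [hq]
    exact hsum
  have h1 : Tendsto (fun t => μ (A (N + t))) atTop (nhds 0) := by
    refine h0.comp ?_
    exact tendsto_atTop_mono (fun t => Nat.le_add_left t N) tendsto_id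
  have h2 : Tendsto (fun t => ∑' k, q (N + t + k)) atTop (nhds 0) := by
    have hg := ENNReal.tendsto_sum_nat_add (fun k => q (N + k)) hsum'
    have heq : ∀ t, (∑' k, q (N + t + k)) = ∑' k, q (N + (k + t)) := by
      intro t
      exact tsum_congr fun k => by rw [show N + t + k = N + (k + t) by omega]
    simpa only [heq] using hg
  have htend : Tendsto (fun t => μ (A (N + t)) + ∑' k, q (N + t + k)) atTop (nhds 0) := by
    have := h1.add h2
    simpa using this
  exact le_antisymm (ge_of_tendsto' htend hmain) zero_le
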